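/- Let Z be a finite connected simple graph with no cut-vertex, i.e., for every vertex v of Z, the subgraph of Z induced on V(Z) \ {v} is connected. Then for every vertex ℓ of Z and every pair of even-cardinality subsets S, T of the set E_ℓ of edges of Z incident to ℓ, there exists an automorphism σ of the graph X_0(Z) with σ(ℓ, S) = (ℓ, T). -/

import Mathlib

open Finset in
lemma even_card_symmDiff {α : Type*} [DecidableEq α] {s t : Finset α}
    (hs : Even s.card) (ht : Even t.card) : Even ((symmDiff s t).card) := by
  have h1 : (symmDiff s t) = (s \ t) ∪ (t \ s) := by
    ext x; simp [symmDiff, Finset.mem_union, Finset.mem_sdiff]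
  have hdisj : Disjoint (s \ t) (t \ s) := by
    refine Finset.disjoint_left.2 ?_
    intro x hx hy
    simp only [Finset.mem_sdiff] at hx hy
    exact hy.2 hx.1
  have h2 : (s \ t).card + (s ∩ t).card = s.card := Finset.card_sdiff_add_card_inter s t
  have h3 : (t \ s).card + (t ∩ s).card = t.card := Finset.card_sdiff_add_card_inter t s
  have h4 : (s ∩ t).card = (t ∩ s).card := by rw [Finset.inter_comm]
  rw [h1, Finset.card_union_of_disjoint hdisj]
  rw [Nat.even_iff] at *
  omega

lemma filter_symmDiff' {α : Type*} [DecidableEq α] (p : α → Prop) [DecidablePred p]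
    (s t : Finset α) : (symmDiff s t).filter p = symmDiff (s.filter p) (t.filter p) := by
  ext x
  simp only [Finset.mem_filter, Finset.mem_symmDiff]
  tauto

open SimpleGraph in
lemma exists_even_F {V : Type*} [Fintype V] [DecidableEq V] (Z : SimpleGraph V) (ℓ : V)
    (hnc : (Z.induce {w : V | w ≠ ℓ}).Connected) :
    ∀ (n : ℕ) (D : Finset (Sym2 V)), D.card = n → ↑D ⊆ Z.incidenceSet ℓ → Even D.card →
    ∃ F : Finset (Sym2 V), (↑F : Set (Sym2 V)) ⊆ Z.edgeSet ∧
      (∀ v, Even ((F.filter (fun x => v ∈ x)).card)) ∧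
      F.filter (fun x => ℓ ∈ x) = D := by
  intro n
  induction n using Nat.strong_induction_on with
  | _ n ih =>
    intro D hcard hD hDe
    rcases Nat.eq_zero_or_pos n with rfl | hpos
    · have : D = ∅ := Finset.card_eq_zero.mp hcard
      subst this
      exact ⟨∅, by simp, by simp, by simp⟩
    · obtain ⟨e, he⟩ := Finset.card_pos.mp (hcard ▸ hpos)
      have heI := hD he
      have heE : e ∈ Z.edgeSet := heI.1
      have heℓ : ℓ ∈ e := heI.2
      have hn2 : 2 ≤ n := by
        rw [hcard, Nat.even_iff] at hDe; omega
      obtain ⟨e', he'⟩ := Finset.card_pos.mp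
        (show 0 < (D.erase e).card by rw [Finset.card_erase_of_mem he, hcard]; omega)
      have hee' : e' ≠ e := Finset.ne_of_mem_erase he'
      have he'D : e' ∈ D := Finset.mem_of_mem_erase he'
      have he'I := hD he'D
      obtain ⟨a, ha⟩ : ∃ a, e = s(ℓ, a) := ⟨Sym2.Mem.other' heℓ, (Sym2.other_spec' heℓ).symm⟩
      obtain ⟨b, hb⟩ : ∃ b, e' = s(ℓ, b) := ⟨Sym2.Mem.other' he'I.2, (Sym2.other_spec' he'I.2).symm⟩
      have hZa : Z.Adj ℓ a := by rw [← SimpleGraph.mem_edgeSet, ← ha]; exact heE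
      have hZb : Z.Adj ℓ b := by rw [← SimpleGraph.mem_edgeSet, ← hb]; exact he'I.1
      have haℓ : a ≠ ℓ := fun h => Z.loopless.irrefl ℓ (h ▸ hZa)
      have hbℓ : b ≠ ℓ := fun h => Z.loopless.irrefl ℓ (h ▸ hZb)
      have hab : a ≠ b := fun h => hee' (by rw [hb, ha, h])
      obtain ⟨w⟩ := hnc.preconnected ⟨a, haℓ⟩ ⟨b, hbℓ⟩
      let f := SimpleGraph.Embedding.induce (G := Z) {w : V | w ≠ ℓ}
      let q : Z.Walk a b := w.toPath.1.map f.toHom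
      have hq : q.IsPath := SimpleGraph.Walk.map_isPath_of_injective f.injective w.toPath.2
      have hℓsup : ℓ ∉ q.support := by
        show ℓ ∉ (SimpleGraph.Walk.map _ _).support
        rw [SimpleGraph.Walk.support_map]
        intro hmem
        rw [List.mem_map] at hmem
        obtain ⟨⟨x, hx⟩, _, hfe⟩ := hmem
        exact hx hfe
      have hedges : ∀ x ∈ q.edges, ℓ ∉ x := by
        intro x hx hℓx
        induction x using Sym2.ind with
        | _ y z =>
          rcases Sym2.mem_iff.mp hℓx with rfl | rfl
          · exact hℓsup (q.fst_mem_support_of_mem_edges hx)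
          · exact hℓsup (q.snd_mem_support_of_mem_edges hx)
      set P := q.edges.toFinset with hP
      have hPnoℓ : ∀ x ∈ P, ℓ ∉ x := fun x hx => hedges x (List.mem_toFinset.mp hx)
      have hPE : ∀ x ∈ P, x ∈ Z.edgeSet := fun x hx =>
        q.edges_subset_edgeSet (List.mem_toFinset.mp hx)
      have heP : e ∉ P := fun h => hPnoℓ e h heℓ
      have he'P : e' ∉ P := fun h => hPnoℓ e' h he'I.2
      have hPpar : ∀ v : V, (Even ((P.filter (fun x => v ∈ x)).card) ↔ (v ≠ a ∧ v ≠ b)) := by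
        intro v
        have hcnt : ((P.filter (fun x => v ∈ x)).card) = q.edges.countP (fun x => v ∈ x) := by
          have h1 : q.edges.toFinset.filter (fun x => v ∈ x)
              = (q.edges.filter (fun x => v ∈ x)).toFinset := by
            ext y; simp
          rw [hP, h1, List.toFinset_card_of_nodup (hq.isTrail.edges_nodup.filter _),
            List.countP_eq_length_filter]
        rw [hcnt]
        have := hq.isTrail.even_countP_edges_iff v
        simp only [hab, ne_eq, not_false_eq_true, forall_true_left, true_implies] at this
        exact this
      set C := insert e (insert e' P) with hC
      have hCpar : ∀ v : V, Even ((C.filter (fun x => v ∈ x)).card) := by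
        intro v
        rw [hC, Finset.filter_insert, Finset.filter_insert]
        by_cases hve : v ∈ e <;> by_cases hve' : v ∈ e'
        · have hvl : v = ℓ := by
            have h1 : v = ℓ ∨ v = a := Sym2.mem_iff.mp (by rw [ha] at hve; exact hve)
            have h2 : v = ℓ ∨ v = b := Sym2.mem_iff.mp (by rw [hb] at hve'; exact hve')
            rcases h1 with h1 | h1
            · exact h1
            rcases h2 with h2 | h2
            · exact h2
            · exact absurd (h1.symm.trans h2) hab
          have h1 : e' ∉ P.filter (fun x => v ∈ x) := fun h => he'P (Finset.mem_of_mem_filter _ h)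
          have h2 : e ∉ insert e' (P.filter (fun x => v ∈ x)) := by
            simp only [Finset.mem_insert]
            rintro (rfl | h)
            · exact hee' rfl
            · exact heP (Finset.mem_of_mem_filter _ h)
          rw [if_pos hve, if_pos hve', Finset.card_insert_of_notMem h2,
            Finset.card_insert_of_notMem h1]
          have hev : Even ((P.filter (fun x => v ∈ x)).card) := by
            rw [hPpar, hvl]
            exact ⟨fun h => haℓ h.symm, fun h => hbℓ h.symm⟩
          rw [Nat.even_add_one, Nat.even_add_one, not_not]
          exact hev
        · have hva : v = a := by
            have h1 : v = ℓ ∨ v = a := Sym2.mem_iff.mp (by rw [ha] at hve; exact hve)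
            rcases h1 with h1 | h1
            · exact absurd (by rw [h1, hb]; exact Sym2.mem_mk_left _ _) hve'
            · exact h1
          have h2 : e ∉ P.filter (fun x => v ∈ x) := fun h => heP (Finset.mem_of_mem_filter _ h)
          rw [if_pos hve, if_neg hve', Finset.card_insert_of_notMem h2]
          have hodd : ¬ Even ((P.filter (fun x => v ∈ x)).card) := by
            rw [hPpar, hva]; simp
          rw [Nat.even_add_one]
          exact hodd
        · have hvb : v = b := by
            have h2 : v = ℓ ∨ v = b := Sym2.mem_iff.mp (by rw [hb] at hve'; exact hve')
            rcases h2 with h2 | h2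
            · exact absurd (by rw [h2, ha]; exact Sym2.mem_mk_left _ _) hve
            · exact h2
          have h1 : e' ∉ P.filter (fun x => v ∈ x) := fun h => he'P (Finset.mem_of_mem_filter _ h)
          rw [if_neg hve, if_pos hve', Finset.card_insert_of_notMem h1]
          have hodd : ¬ Even ((P.filter (fun x => v ∈ x)).card) := by
            rw [hPpar, hvb]; simp [hab]
          rw [Nat.even_add_one]
          exact hodd
        · rw [if_neg hve, if_neg hve']
          rw [hPpar]
          constructor
          · rintro rfl; exact hve (by rw [ha]; exact Sym2.mem_mk_right _ _)
          · rintro rfl; exact hve' (by rw [hb]; exact Sym2.mem_mk_right _ _)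
      have hCfilter : C.filter (fun x => ℓ ∈ x) = {e, e'} := by
        rw [hC, Finset.filter_insert, Finset.filter_insert, if_pos heℓ, if_pos he'I.2]
        have : P.filter (fun x => ℓ ∈ x) = ∅ := by
          rw [Finset.filter_eq_empty_iff]
          exact hPnoℓ
        rw [this]
        rfl
      set D' := (D.erase e).erase e' with hD'
      have hD'card : D'.card = n - 2 := by
        rw [hD', Finset.card_erase_of_mem he', Finset.card_erase_of_mem he, hcard]
        omega
      have hD'sub : ↑D' ⊆ Z.incidenceSet ℓ := by
        refine Set.Subset.trans ?_ hD
        intro x hx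
        simp only [Finset.coe_subset, hD'] at *
        exact Finset.mem_of_mem_erase (Finset.mem_of_mem_erase (by exact_mod_cast hx))
      have hD'even : Even D'.card := by
        rw [hD'card, Nat.even_iff]
        rw [hcard, Nat.even_iff] at hDe
        omega
      obtain ⟨F', hF'E, hF'par, hF'filter⟩ := ih (n - 2) (by omega) D' hD'card hD'sub hD'even
      refine ⟨symmDiff F' C, ?_, ?_, ?_⟩
      · intro x hx
        rcases Finset.mem_symmDiff.mp (by exact_mod_cast hx) with ⟨h, _⟩ | ⟨h, _⟩
        · exact hF'E (by exact_mod_cast h)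
        · rw [hC] at h
          rcases Finset.mem_insert.mp h with rfl | h
          · exact heE
          rcases Finset.mem_insert.mp h with rfl | h
          · exact he'I.1
          · exact hPE _ h
      · intro v
        rw [filter_symmDiff']
        exact even_card_symmDiff (hF'par v) (hCpar v)
      · rw [filter_symmDiff', hF'filter, hCfilter]
        have hdisj : Disjoint D' ({e, e'} : Finset (Sym2 V)) := by
          rw [Finset.disjoint_left]
          intro x hx
          rw [hD', Finset.mem_erase, Finset.mem_erase] at hx
          simp only [Finset.mem_insert, Finset.mem_singleton]
          rintro (rfl | rfl)
          · exact hx.2.1 rfl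
          · exact hx.1 rfl
        rw [Disjoint.symmDiff_eq_sup hdisj]
        ext x
        simp only [Finset.sup_eq_union, Finset.mem_union, Finset.mem_insert,
          Finset.mem_singleton, hD', Finset.mem_erase]
        constructor
        · rintro (⟨_, _, h⟩ | rfl | rfl)
          · exact h
          · exact he
          · exact he'D
        · intro hxD
          by_cases h1 : x = e
          · exact Or.inr (Or.inl h1)
          by_cases h2 : x = e'
          · exact Or.inr (Or.inr h2)
          · exact Or.inl ⟨h2, h1, hxD⟩
/-- The graph `X₀(Z)`: vertices are pairs `(ℓ, S)` with `S` an even-cardinality set of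
edges of `Z` incident to `ℓ`; `(ℓ, S)` and `(k, T)` are adjacent iff `ℓ` is adjacent to
`k` in `Z` and the edge `{ℓ, k}` lies in exactly one of `S` and `T`. -/
def X0 {V : Type*} [DecidableEq V] (Z : SimpleGraph V) :
    SimpleGraph {p : V × Finset (Sym2 V) // ↑p.2 ⊆ Z.incidenceSet p.1 ∧ Even p.2.card} where
  Adj p q := Z.Adj p.1.1 q.1.1 ∧ Xor' (s(p.1.1, q.1.1) ∈ p.1.2) (s(p.1.1, q.1.1) ∈ q.1.2)
  symm := by
    constructor
    rintro ⟨⟨l, S⟩, _⟩ ⟨⟨k, T⟩, _⟩ ⟨hadj, hx⟩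
    refine ⟨hadj.symm, ?_⟩
    rw [Sym2.eq_swap]
    simp only [Xor', Xor] at hx ⊢
    tauto
  loopless := by
    constructor
    rintro ⟨⟨l, S⟩, _⟩ ⟨hadj, _⟩
    exact Z.loopless.irrefl l hadj

set_option maxHeartbeats 1600000 in
/-- If `Z` is a finite connected graph with no cut-vertex (removing any
vertex leaves it connected), then for any vertex `ℓ` and any even subsets `S`, `T` of the
edges incident to `ℓ`, some automorphism of `X₀(Z)` maps `(ℓ, S)` to `(ℓ, T)`. -/
theorem X0_automorphism_fixing_first_coordinate {V : Type*} [Fintype V] [DecidableEq V]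
    (Z : SimpleGraph V) (hconn : Z.Connected)
    (hnocut : ∀ v : V, ((Z.induce {w : V | w ≠ v})).Connected)
    (ℓ : V) (S T : Finset (Sym2 V))
    (hS : ↑S ⊆ Z.incidenceSet ℓ) (hSe : Even S.card)
    (hT : ↑T ⊆ Z.incidenceSet ℓ) (hTe : Even T.card) :
    ∃ φ : X0 Z ≃g X0 Z, φ ⟨(ℓ, S), hS, hSe⟩ = ⟨(ℓ, T), hT, hTe⟩ := by
  classical
  set D := symmDiff S T with hDdef
  have hDsub : ↑D ⊆ Z.incidenceSet ℓ := by
    intro x hx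
    rcases Finset.mem_symmDiff.mp (by exact_mod_cast hx) with ⟨h, _⟩ | ⟨h, _⟩
    · exact hS (by exact_mod_cast h)
    · exact hT (by exact_mod_cast h)
  have hDe : Even D.card := even_card_symmDiff hSe hTe
  obtain ⟨F, hFE, hFpar, hFfilter⟩ := exists_even_F Z ℓ (hnocut ℓ) D.card D rfl hDsub hDe
  let g : {p : V × Finset (Sym2 V) // ↑p.2 ⊆ Z.incidenceSet p.1 ∧ Even p.2.card}
      → {p : V × Finset (Sym2 V) // ↑p.2 ⊆ Z.incidenceSet p.1 ∧ Even p.2.card} :=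
    fun p => ⟨(p.1.1, symmDiff p.1.2 (F.filter (fun x => p.1.1 ∈ x))), by
      constructor
      · intro x hx
        rcases Finset.mem_symmDiff.mp (by exact_mod_cast hx) with ⟨h, _⟩ | ⟨h, _⟩
        · exact p.2.1 (by exact_mod_cast h)
        · rw [Finset.mem_filter] at h
          exact ⟨hFE h.1, h.2⟩
      · exact even_card_symmDiff p.2.2 (hFpar p.1.1)⟩
  have hg : Function.Involutive g := by
    intro p
    apply Subtype.ext
    apply Prod.ext
    · rfl
    · show symmDiff (symmDiff p.1.2 _) _ = p.1.2
      exact symmDiff_symmDiff_cancel_right _ _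
  refine ⟨⟨Function.Involutive.toPerm g hg, @fun p q => ?_⟩, ?_⟩
  · obtain ⟨⟨v, A⟩, hA⟩ := p
    obtain ⟨⟨w, B⟩, hB⟩ := q
    simp only [Function.Involutive.coe_toPerm]
    change (Z.Adj v w ∧ Xor' (s(v, w) ∈ symmDiff A (F.filter (fun x => v ∈ x)))
        (s(v, w) ∈ symmDiff B (F.filter (fun x => w ∈ x)))) ↔
      (Z.Adj v w ∧ Xor' (s(v, w) ∈ A) (s(v, w) ∈ B))
    apply and_congr_right
    intro hadj
    have h1 : s(v, w) ∈ symmDiff A (F.filter (fun x => v ∈ x)) ↔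
        Xor' (s(v, w) ∈ A) (s(v, w) ∈ F) := by
      rw [Finset.mem_symmDiff]
      simp only [Finset.mem_filter, Sym2.mem_mk_left, and_true, Xor', Xor]
      try tauto
    have h2 : s(v, w) ∈ symmDiff B (F.filter (fun x => w ∈ x)) ↔
        Xor' (s(v, w) ∈ B) (s(v, w) ∈ F) := by
      rw [Finset.mem_symmDiff]
      simp only [Finset.mem_filter, Sym2.mem_mk_right, and_true, Xor', Xor]
      try tauto
    rw [h1, h2]
    simp only [Xor', Xor]
    tauto
  · apply Subtype.ext
    apply Prod.ext
    · rfl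
    · show symmDiff S (F.filter (fun x => ℓ ∈ x)) = T
      rw [hFfilter, hDdef]
      exact symmDiff_symmDiff_cancel_left S T
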